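/- Let G be a finite abelian group, S a symmetric multiset of size k, and F: S → GL(N,ℂ) with F(s^{-1}) = F(s)*, defining a Hermitian symmetric transmission system P(x,y,s) = F(s) on the Cayley graph (X,G;S). Then the eigenvalues of the transmission graph Laplacian Δ^P are exactly 1 − (1/k)·μ, where μ ranges over the eigenvalues of the N×N matrices Σ_{s∈S} χ(s)F(s) as χ ranges over the irreducible characters of G. -/

import Mathlib

open Finset Matrix

/-- The transmission graph Laplacian of the Cayley graph `(X,G;S)` of a finite
abelian group with the Hermitian symmetric transmission system
`P(x,y,s) = F(s) = F(x⁻¹y)`: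
`(Δ^P f)(x) = f(x) - (1/k) Σ_g count_S(x⁻¹g) · F(x⁻¹g) f(g)`. -/
noncomputable def cayleyTransLap {G : Type} [CommGroup G] [Fintype G]
    [DecidableEq G] (N : ℕ) (S : Multiset G) (k : ℕ)
    (F : G → Matrix (Fin N) (Fin N) ℂ) (f : G → Fin N → ℂ) : G → Fin N → ℂ :=
  fun x => f x - (k : ℂ)⁻¹ •
    ∑ g : G, (S.count (x⁻¹ * g) : ℂ) • (F (x⁻¹ * g)).mulVec (f g)


section Aux
variable {G : Type} [CommGroup G] [Fintype G]
set_option linter.unusedSectionVars false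

private lemma sum_mulVec' {N : ℕ} {ι : Type*} (s : Finset ι)
    (M : ι → Matrix (Fin N) (Fin N) ℂ) (v : Fin N → ℂ) :
    (∑ i ∈ s, M i).mulVec v = ∑ i ∈ s, (M i).mulVec v := by
  ext x
  simp only [Matrix.mulVec, dotProduct, Matrix.sum_apply, Finset.sum_apply,
    Finset.sum_mul]
  exact Finset.sum_comm

private lemma sum_addChar_eq (ψ : AddChar (Additive G) ℂ) :
    ∑ y : G, ψ (Additive.ofMul y) = if ψ = 0 then (Fintype.card G : ℂ) else 0 := by
  have h1 : ∑ y : G, ψ (Additive.ofMul y) = ∑ a : Additive G, ψ a :=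
    Fintype.sum_equiv Additive.ofMul _ _ (fun _ => rfl)
  have h2 := AddChar.expect_eq_ite ψ
  rw [Fintype.expect_eq_sum_div_card] at h2
  have hcard : (Fintype.card (Additive G) : ℂ) ≠ 0 := by
    exact_mod_cast Fintype.card_ne_zero
  have hc : Fintype.card (Additive G) = Fintype.card G :=
    Fintype.card_congr Additive.toMul
  rw [div_eq_iff hcard] at h2
  rw [h1, h2, hc]
  split_ifs <;> ring

private lemma orth (ψ φ : AddChar (Additive G) ℂ) :
    ∑ y : G, ψ (Additive.ofMul y⁻¹) * φ (Additive.ofMul y)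
      = if φ = ψ then (Fintype.card G : ℂ) else 0 := by
  have h : ∀ y : G, ψ (Additive.ofMul y⁻¹) * φ (Additive.ofMul y)
      = (φ - ψ) (Additive.ofMul y) := by
    intro y
    rw [AddChar.sub_apply, ofMul_inv, mul_comm]
  simp_rw [h]
  rw [sum_addChar_eq]
  congr 1
  simp [sub_eq_zero]

end Aux

section Aux2
variable {G : Type} [CommGroup G] [Fintype G]
set_option linter.unusedSectionVars false

private lemma exists_char {N : ℕ} (f : G → Fin N → ℂ) (hf : f ≠ 0) :
    ∃ ψ : AddChar (Additive G) ℂ, (∑ y : G, ψ (Additive.ofMul y⁻¹) • f y) ≠ 0 := by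
  by_contra hcon
  push_neg at hcon
  apply hf
  funext x i
  set fi : Additive G → ℂ := fun a => f a.toMul i with hfidef
  set B := AddChar.complexBasis (Additive G) with hB
  have hrep := B.sum_repr fi
  set c := B.repr fi with hc
  have hrep' : ∀ a : Additive G, fi a = ∑ φ : AddChar (Additive G) ℂ, c φ * φ a := by
    intro a
    conv_lhs => rw [← hrep]
    simp [Finset.sum_apply, hB]
  have hcz : ∀ ψ : AddChar (Additive G) ℂ, c ψ = 0 := by
    intro ψ
    have h0 : ∑ y : G, ψ (Additive.ofMul y⁻¹) * fi (Additive.ofMul y) = 0 := by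
      have := congrFun (hcon ψ) i
      simpa [Finset.sum_apply, fi] using this
    have h1 : ∑ y : G, ψ (Additive.ofMul y⁻¹) * fi (Additive.ofMul y)
        = ∑ φ : AddChar (Additive G) ℂ,
            c φ * ∑ y : G, ψ (Additive.ofMul y⁻¹) * φ (Additive.ofMul y) := by
      simp_rw [hrep', Finset.mul_sum]
      rw [Finset.sum_comm]
      refine Finset.sum_congr rfl fun φ _ => Finset.sum_congr rfl fun y _ => by ring
    have h2 : ∑ φ : AddChar (Additive G) ℂ,
        c φ * ∑ y : G, ψ (Additive.ofMul y⁻¹) * φ (Additive.ofMul y)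
        = c ψ * (Fintype.card G : ℂ) := by
      simp_rw [orth]
      simp
    have hcard : (Fintype.card G : ℂ) ≠ 0 := by exact_mod_cast Fintype.card_ne_zero
    have := h0.symm.trans (h1.trans h2)
    exact (mul_eq_zero.mp this.symm).resolve_right hcard
  have hfi : fi = 0 := by
    rw [← hrep]
    simp [hcz]
  exact congrFun hfi (Additive.ofMul x)

end Aux2

/-- Eigenvalues of Cayley graphs with transmission systems: for a finite
abelian group `G`, a symmetric multiset `S` of size `k`, and
`F : S → GL(N,ℂ)` with `F(s⁻¹) = F(s)ᴴ` (a Hermitian symmetric transmission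
system on the Cayley graph `(X,G;S)`), the eigenvalues of the transmission
graph Laplacian `Δ^P` are exactly the numbers `1 - (1/k)·ν` where `ν` ranges
over the eigenvalues of the matrices `Σ_{s ∈ S} χ(s) F(s)` as `χ` ranges over
the irreducible characters of `G`. -/
theorem cayley_transLap_eigenvalues {G : Type} [CommGroup G] [Fintype G]
    [DecidableEq G] (N : ℕ) (S : Multiset G) (k : ℕ)
    (hk : Multiset.card S = k) (hk0 : 0 < k)
    (hsymm : ∀ s : G, S.count s⁻¹ = S.count s)
    (F : G → Matrix (Fin N) (Fin N) ℂ)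
    (hF : ∀ s : G, F s⁻¹ = (F s)ᴴ)
    (hFinv : ∀ s : G, IsUnit (F s).det) (μ : ℂ) :
    (∃ f : G → Fin N → ℂ, f ≠ 0 ∧ cayleyTransLap N S k F f = μ • f) ↔
    ∃ (χ : G →* ℂ) (ν : ℂ) (v : Fin N → ℂ), v ≠ 0 ∧
      (∑ g : G, (S.count g : ℂ) • (χ g • F g)).mulVec v = ν • v ∧
      μ = 1 - (k : ℂ)⁻¹ * ν := by
  have hk' : (k : ℂ) ≠ 0 := Nat.cast_ne_zero.mpr hk0.ne'
  constructor
  · rintro ⟨f, hf, heig⟩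
    obtain ⟨ψ, hψ⟩ := exists_char f hf
    set χ : G →* ℂ :=
      { toFun := fun g => ψ (Additive.ofMul g)
        map_one' := ψ.map_zero_eq_one
        map_mul' := fun a b => ψ.map_add_eq_mul a b } with hχ
    set ν : ℂ := (k : ℂ) * (1 - μ) with hν
    set c : Fin N → ℂ := ∑ y : G, ψ (Additive.ofMul y⁻¹) • f y with hcdef
    have hT : ∀ x : G,
        ∑ s : G, (S.count s : ℂ) • (F s).mulVec (f (x * s)) = ν • f x := by
      intro x
      have hx := congrFun heig x
      simp only [cayleyTransLap, Pi.smul_apply] at hx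
      have hre : ∑ s : G, (S.count s : ℂ) • (F s).mulVec (f (x * s))
          = ∑ g : G, (S.count (x⁻¹ * g) : ℂ) • (F (x⁻¹ * g)).mulVec (f g) :=
        Fintype.sum_equiv (Equiv.mulLeft x) _ _ (fun s => by simp)
      rw [← hre] at hx
      have h1 : (k : ℂ)⁻¹ • (∑ s : G, (S.count s : ℂ) • (F s).mulVec (f (x * s)))
          = f x - μ • f x := by
        rw [← hx, sub_sub_cancel]
      calc ∑ s : G, (S.count s : ℂ) • (F s).mulVec (f (x * s))
          = (k : ℂ) • ((k : ℂ)⁻¹ •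
              ∑ s : G, (S.count s : ℂ) • (F s).mulVec (f (x * s))) := by
            rw [smul_smul, mul_inv_cancel₀ hk', one_smul]
        _ = (k : ℂ) • (f x - μ • f x) := by rw [h1]
        _ = ν • f x := by rw [hν]; module
    have hlin : ∀ A : Matrix (Fin N) (Fin N) ℂ,
        A.mulVec c = ∑ g : G, ψ (Additive.ofMul g⁻¹) • A.mulVec (f g) := by
      intro A
      rw [hcdef, ← A.mulVecLin_apply, map_sum]
      simp [Matrix.mulVecLin_apply, Matrix.mulVec_smul]
    refine ⟨χ, ν, c, hψ, ?_, by rw [hν, ← mul_assoc, inv_mul_cancel₀ hk', one_mul]; ring⟩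
    have hL : (∑ g : G, (S.count g : ℂ) • (χ g • F g)).mulVec c
        = ∑ s : G, ∑ g : G,
          ((S.count s : ℂ) * (χ s * ψ (Additive.ofMul g⁻¹))) • (F s).mulVec (f g) := by
      rw [sum_mulVec']
      refine Finset.sum_congr rfl fun s _ => ?_
      rw [Matrix.smul_mulVec, Matrix.smul_mulVec, hlin, Finset.smul_sum, Finset.smul_sum]
      refine Finset.sum_congr rfl fun g _ => ?_
      rw [smul_smul, smul_smul]
      congr 1
      ring
    have hR : ν • c
        = ∑ s : G, ∑ g : G,
          ((S.count s : ℂ) * (χ s * ψ (Additive.ofMul g⁻¹))) • (F s).mulVec (f g) := by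
      calc ν • c = ∑ y : G, ψ (Additive.ofMul y⁻¹) • (ν • f y) := by
            rw [hcdef, Finset.smul_sum]
            exact Finset.sum_congr rfl fun y _ => by rw [smul_smul, smul_smul, mul_comm]
        _ = ∑ y : G, ∑ s : G,
              ψ (Additive.ofMul y⁻¹) • (S.count s : ℂ) • (F s).mulVec (f (y * s)) := by
            refine Finset.sum_congr rfl fun y _ => ?_
            rw [← hT y, Finset.smul_sum]
        _ = ∑ s : G, ∑ y : G,
              ψ (Additive.ofMul y⁻¹) • (S.count s : ℂ) • (F s).mulVec (f (y * s)) :=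
            Finset.sum_comm
        _ = ∑ s : G, ∑ g : G,
              ((S.count s : ℂ) * (χ s * ψ (Additive.ofMul g⁻¹))) • (F s).mulVec (f g) := by
            refine Finset.sum_congr rfl fun s _ => ?_
            refine (Fintype.sum_equiv (Equiv.mulRight s⁻¹) _ _ fun g => ?_).symm
            have h3 : g * s⁻¹ * s = g := inv_mul_cancel_right g s
            have h4 : ψ (Additive.ofMul (g * s⁻¹)⁻¹) = χ s * ψ (Additive.ofMul g⁻¹) := by
              rw [_root_.mul_inv_rev, inv_inv, ofMul_mul, ψ.map_add_eq_mul]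
              rfl
            simp only [Equiv.coe_mulRight, h3, h4]
            rw [smul_smul]
            congr 1
            ring
    rw [hL, hR]
  · rintro ⟨χ, ν, v, hv, hmv, hμ⟩
    refine ⟨fun g => χ g • v, ?_, ?_⟩
    · intro h
      apply hv
      have := congrFun h 1
      simpa using this
    · funext x
      simp only [cayleyTransLap, Pi.smul_apply]
      have hre : ∑ g : G, (S.count (x⁻¹ * g) : ℂ) • (F (x⁻¹ * g)).mulVec (χ g • v)
          = χ x • (ν • v) := by
        have h1 : ∑ g : G, (S.count (x⁻¹ * g) : ℂ) • (F (x⁻¹ * g)).mulVec (χ g • v)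
            = ∑ s : G, (S.count s : ℂ) • (F s).mulVec (χ (x * s) • v) :=
          (Fintype.sum_equiv (Equiv.mulLeft x) _ _ (fun s => by simp)).symm
        rw [h1]
        have h2 : ∀ s : G, (S.count s : ℂ) • (F s).mulVec (χ (x * s) • v)
            = χ x • ((S.count s : ℂ) • (χ s • (F s).mulVec v)) := by
          intro s
          rw [_root_.map_mul, Matrix.mulVec_smul]
          module
        simp_rw [h2]
        rw [← Finset.smul_sum]
        congr 1
        rw [← hmv, sum_mulVec']
        refine Finset.sum_congr rfl fun g _ => ?_
        rw [Matrix.smul_mulVec, Matrix.smul_mulVec]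
      rw [hre, hμ]
      module
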